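/- For every integer k with 0 ≤ k ≤ n−1, the linear map W_k : ⋀^k E → ⋀^{k+2}E defined by W_k(α) = ω ∧ α is injective. -/

import Mathlib

open ExteriorAlgebra

namespace LefAux

variable {E : Type*} [AddCommGroup E] [Module ℝ E]

noncomputable abbrev ct (f : Module.Dual ℝ E) :
    ExteriorAlgebra ℝ E →ₗ[ℝ] ExteriorAlgebra ℝ E :=
  CliffordAlgebra.contractLeft f

lemma extPow_def (j : ℕ) :
    ⋀[ℝ]^j E = (LinearMap.range (ι ℝ : E →ₗ[ℝ] ExteriorAlgebra ℝ E)) ^ j := rfl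

lemma ct_ι_mul (f : Module.Dual ℝ E) (v : E) (x : ExteriorAlgebra ℝ E) :
    ct f (ι ℝ v * x) = f v • x - ι ℝ v * ct f x :=
  CliffordAlgebra.contractLeft_ι_mul _ _ _

lemma ct_ι (f : Module.Dual ℝ E) (v : E) :
    ct f (ι ℝ v) = algebraMap ℝ _ (f v) :=
  CliffordAlgebra.contractLeft_ι _ _ _

lemma ct_algebraMap (f : Module.Dual ℝ E) (r : ℝ) :
    ct f (algebraMap ℝ (ExteriorAlgebra ℝ E) r) = 0 :=
  CliffordAlgebra.contractLeft_algebraMap _ _ _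

lemma mem_zeroth {x : ExteriorAlgebra ℝ E} (hx : x ∈ ⋀[ℝ]^0 E) :
    ∃ r : ℝ, x = algebraMap ℝ _ r := by
  rw [extPow_def, pow_zero] at hx
  obtain ⟨r, hr⟩ := Submodule.mem_one.mp hx
  exact ⟨r, hr.symm⟩

lemma ct_zeroth (f : Module.Dual ℝ E) {x : ExteriorAlgebra ℝ E} (hx : x ∈ ⋀[ℝ]^0 E) :
    ct f x = 0 := by
  obtain ⟨r, rfl⟩ := mem_zeroth hx
  exact ct_algebraMap f r

lemma ct_mem (f : Module.Dual ℝ E) :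
    ∀ (j : ℕ) (x : ExteriorAlgebra ℝ E), x ∈ ⋀[ℝ]^(j+1) E → ct f x ∈ ⋀[ℝ]^j E := by
  intro j
  induction j with
  | zero =>
    intro x hx
    rw [extPow_def, pow_one] at hx
    obtain ⟨v, rfl⟩ := hx
    rw [ct_ι]
    rw [extPow_def, pow_zero]
    exact Submodule.mem_one.mpr ⟨f v, rfl⟩
  | succ j ih =>
    intro x hx
    rw [extPow_def, pow_succ'] at hx
    refine Submodule.mul_induction_on hx ?_ ?_
    · rintro m ⟨v, rfl⟩ y hy
      rw [ct_ι_mul]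
      refine Submodule.sub_mem _ (Submodule.smul_mem _ _ hy) ?_
      rw [extPow_def, pow_succ']
      exact Submodule.mul_mem_mul (LinearMap.mem_range_self _ v) (ih y hy)
    · intro a b ha hb
      rw [map_add]
      exact Submodule.add_mem _ ha hb


lemma ct_comm_two (f : Module.Dual ℝ E) {ω : ExteriorAlgebra ℝ E} (hω : ω ∈ ⋀[ℝ]^2 E)
    (x : ExteriorAlgebra ℝ E) :
    ct f (ω * x) = ct f ω * x + ω * ct f x := by
  rw [extPow_def, pow_two] at hω
  refine Submodule.mul_induction_on hω ?_ ?_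
  · rintro _ ⟨u, rfl⟩ _ ⟨v, rfl⟩
    rw [mul_assoc, ct_ι_mul, ct_ι_mul, ct_ι_mul, ct_ι]
    simp only [mul_sub, sub_mul, smul_mul_assoc, mul_smul_comm,
      Algebra.algebraMap_eq_smul_one, one_mul, mul_assoc]
    abel
  · intro a b ha hb
    rw [add_mul, map_add, map_add, ha, hb]
    noncomm_ring

lemma counting {N : ℕ} (b : Module.Basis (Fin N) ℝ E) :
    ∀ (j : ℕ) (x : ExteriorAlgebra ℝ E), x ∈ ⋀[ℝ]^j E →
      ∑ i, ι ℝ (b i) * ct (b.coord i) x = (j : ℝ) • x := by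
  intro j
  induction j with
  | zero =>
    intro x hx
    obtain ⟨r, rfl⟩ := mem_zeroth hx
    simp [ct_algebraMap]
  | succ j ih =>
    intro x hx
    rw [extPow_def, pow_succ'] at hx
    refine Submodule.mul_induction_on hx ?_ ?_
    · rintro _ ⟨v, rfl⟩ y hy
      have step : ∀ i : Fin N, ι ℝ (b i) * ct (b.coord i) (ι ℝ v * y)
          = (b.coord i v • ι ℝ (b i)) * y + ι ℝ v * (ι ℝ (b i) * ct (b.coord i) y) := by
        intro i
        rw [ct_ι_mul, mul_sub, mul_smul_comm, ← mul_assoc, ← mul_assoc]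
        have hswap : ι ℝ (b i) * ι ℝ v = - (ι ℝ v * ι ℝ (b i)) := by
          rw [eq_neg_iff_add_eq_zero, add_comm]
          exact ι_add_mul_swap v (b i)
        rw [hswap, smul_mul_assoc, neg_mul, sub_neg_eq_add]
      rw [Finset.sum_congr rfl (fun i _ => step i), Finset.sum_add_distrib]
      have h1 : ∑ i, (b.coord i v • ι ℝ (b i)) * y = ι ℝ v * y := by
        rw [← Finset.sum_mul]
        congr 1
        have h := congrArg (ι ℝ (M := E)) (b.sum_repr v)
        rw [map_sum] at h
        simpa [Module.Basis.coord_apply] using h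
      have h2 : ∑ i, ι ℝ v * (ι ℝ (b i) * ct (b.coord i) y) = (j : ℝ) • (ι ℝ v * y) := by
        rw [← Finset.mul_sum, ih y hy, mul_smul_comm]
      rw [h1, h2, Nat.cast_succ, add_smul, one_smul]
      abel
    · intro a b' ha hb'
      simp only [map_add, mul_add, Finset.sum_add_distrib, smul_add, ha, hb']


noncomputable def phi (ω : ExteriorAlgebra ℝ E) : Module.Dual ℝ E →ₗ[ℝ] E :=
  ιInv ∘ₗ (LinearMap.flip (CliffordAlgebra.contractLeft (Q := (0 : QuadraticForm ℝ E))) ω)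

lemma ι_phi {ω : ExteriorAlgebra ℝ E} (hω : ω ∈ ⋀[ℝ]^2 E) (f : Module.Dual ℝ E) :
    ι ℝ (phi ω f) = ct f ω := by
  have h1 : ct f ω ∈ ⋀[ℝ]^1 E := ct_mem f 1 ω hω
  rw [extPow_def, pow_one] at h1
  obtain ⟨v, hv⟩ := h1
  have hd : phi ω f = ιInv (ct f ω) := rfl
  rw [hd, ← hv, ι_leftInverse v]

lemma skew {ω : ExteriorAlgebra ℝ E} (hω : ω ∈ ⋀[ℝ]^2 E) (f g : Module.Dual ℝ E) :
    g (phi ω f) = - f (phi ω g) := by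
  have h1 : ct g (ct f ω) = algebraMap ℝ _ (g (phi ω f)) := by
    rw [← ι_phi hω f, ct_ι]
  have h2 : ct g (ct f ω) = - algebraMap ℝ _ (f (phi ω g)) := by
    have := CliffordAlgebra.contractLeft_comm (Q := (0 : QuadraticForm ℝ E)) (d := g) (d' := f) ω
    rw [this, ← ι_phi hω g, ct_ι]
  rw [h1, ← map_neg] at h2
  exact (ExteriorAlgebra.algebraMap_inj _ _ _).mp h2

lemma top_vanish [FiniteDimensional ℝ E] {W : Submodule ℝ E} {k : ℕ}
    (hk : Module.finrank ℝ W < k) {x : ExteriorAlgebra ℝ E}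
    (hx : x ∈ (Submodule.map (ι ℝ : E →ₗ[ℝ] ExteriorAlgebra ℝ E) W) ^ k) : x = 0 := by
  -- first: everything in the k-th power is in the span of `ιMulti` of W-valued tuples
  have main : ∀ (m : ℕ) (y : ExteriorAlgebra ℝ E),
      y ∈ (Submodule.map (ι ℝ : E →ₗ[ℝ] ExteriorAlgebra ℝ E) W) ^ m →
      y ∈ Submodule.span ℝ {z | ∃ v : Fin m → E, (∀ i, v i ∈ W) ∧ z = ιMulti ℝ m v} := by
    intro m
    induction m with
    | zero =>
      intro y hy
      rw [pow_zero] at hy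
      obtain ⟨r, rfl⟩ := Submodule.mem_one.mp hy
      have h0 : (algebraMap ℝ (ExteriorAlgebra ℝ E)) r
          = r • ιMulti ℝ 0 (fun i => (0 : E)) := by
        rw [ιMulti_zero_apply, Algebra.algebraMap_eq_smul_one]
      rw [h0]
      exact Submodule.smul_mem _ _ (Submodule.subset_span ⟨fun i => 0, fun i => i.elim0, rfl⟩)
    | succ m ih =>
      intro y hy
      rw [pow_succ'] at hy
      refine Submodule.mul_induction_on hy ?_ ?_
      · rintro _ ⟨w, hw, rfl⟩ z hz
        have hz' := ih z hz
        refine Submodule.span_induction ?_ ?_ ?_ ?_ hz'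
        · rintro _ ⟨v, hv, rfl⟩
          refine Submodule.subset_span ⟨Fin.cons w v, ?_, ?_⟩
          · intro i
            refine Fin.cases ?_ ?_ i
            · exact hw
            · intro j; exact hv j
          · have htl : Matrix.vecTail (Fin.cons w v) = v := by
              ext j; simp [Matrix.vecTail]
            rw [ιMulti_succ_apply, Fin.cons_zero, htl]
        · simp
        · intro a b _ _ ha hb
          rw [mul_add]
          exact Submodule.add_mem _ ha hb
        · intro r a _ ha
          rw [mul_smul_comm]
          exact Submodule.smul_mem _ _ ha
      · intro a b ha hb
        exact Submodule.add_mem _ ha hb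
  have hx' := main k x hx
  have hz : {z : ExteriorAlgebra ℝ E | ∃ v : Fin k → E, (∀ i, v i ∈ W) ∧ z = ιMulti ℝ k v}
      ⊆ {(0 : ExteriorAlgebra ℝ E)} := by
    rintro _ ⟨v, hv, rfl⟩
    have hdep : ¬ LinearIndependent ℝ v := by
      intro hli
      have : v = W.subtype ∘ (fun i => (⟨v i, hv i⟩ : W)) := by ext i; rfl
      rw [this] at hli
      have hli' := LinearIndependent.of_comp W.subtype hli
      have := LinearIndependent.fintype_card_le_finrank hli'
      simp only [Fintype.card_fin] at this
      omega
    simp only [Set.mem_singleton_iff]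
    exact AlternatingMap.map_linearDependent (ιMulti ℝ k) v hdep
  have hle : Submodule.span ℝ
      {z : ExteriorAlgebra ℝ E | ∃ v : Fin k → E, (∀ i, v i ∈ W) ∧ z = ιMulti ℝ k v} ≤ ⊥ := by
    rw [Submodule.span_le]
    intro z hzz
    simp only [SetLike.mem_coe, Submodule.mem_bot]
    simpa using hz hzz
  simpa using hle hx'


lemma rho_two {ω : ExteriorAlgebra ℝ E} (hω : ω ∈ ⋀[ℝ]^2 E)
    (f : Module.Dual ℝ E) (v₀ : E) (hv₀ : f v₀ = 1) :
    map (LinearMap.id - LinearMap.smulRight f v₀) ω = ω - ι ℝ v₀ * ct f ω := by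
  rw [extPow_def, pow_two] at hω
  set π : E →ₗ[ℝ] E := LinearMap.id - LinearMap.smulRight f v₀ with hπ
  refine Submodule.mul_induction_on hω ?_ ?_
  · rintro _ ⟨u, rfl⟩ _ ⟨v, rfl⟩
    have hπ_apply : ∀ w : E, π w = w - f w • v₀ := fun w => rfl
    rw [map_mul, map_apply_ι, map_apply_ι, hπ_apply, hπ_apply]
    rw [ct_ι_mul, ct_ι]
    have hcross : ι ℝ u * ι ℝ v₀ = - (ι ℝ v₀ * ι ℝ u) := by
      rw [eq_neg_iff_add_eq_zero, add_comm]; exact ι_add_mul_swap v₀ u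
    simp only [map_sub, map_smul, sub_mul, mul_sub, smul_mul_assoc, mul_smul_comm,
      Algebra.algebraMap_eq_smul_one, mul_one, smul_smul, ι_sq_zero, smul_zero,
      sub_zero, hcross, smul_neg]
    abel
  · intro a b ha hb
    simp only [map_add, mul_add, ha, hb]
    abel

lemma phi_injective [FiniteDimensional ℝ E] {n : ℕ} (hn : 1 ≤ n)
    (hdim : Module.finrank ℝ E = 2 * n)
    {ω : ExteriorAlgebra ℝ E} (hω : ω ∈ ⋀[ℝ]^2 E) (hωn : ω ^ n ≠ 0) :
    Function.Injective (phi ω) := by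
  rw [← LinearMap.ker_eq_bot, LinearMap.ker_eq_bot']
  intro f hf
  by_contra hf0
  -- pick v₀ with f v₀ = 1
  obtain ⟨v, hv⟩ : ∃ v, f v ≠ 0 := by
    by_contra h
    push_neg at h
    exact hf0 (LinearMap.ext fun v => h v)
  set v₀ : E := (f v)⁻¹ • v with hv₀def
  have hv₀ : f v₀ = 1 := by
    rw [hv₀def, map_smul, smul_eq_mul, inv_mul_cancel₀ hv]
  -- ct f ω = 0
  have hct : ct f ω = 0 := by
    rw [← ι_phi hω f, hf, map_zero]
  set π : E →ₗ[ℝ] E := LinearMap.id - LinearMap.smulRight f v₀ with hπ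
  have hfix : map π ω = ω := by
    rw [rho_two hω f v₀ hv₀, hct, mul_zero, sub_zero]
  have hker : ∀ w : E, π w ∈ LinearMap.ker f := by
    intro w
    rw [LinearMap.mem_ker]
    have : π w = w - f w • v₀ := rfl
    rw [this, map_sub, map_smul, hv₀, smul_eq_mul, mul_one, sub_self]
  -- image of ⋀^k under map π lands in powers of (ι '' ker f)
  have hmem : ∀ (k : ℕ) (x : ExteriorAlgebra ℝ E), x ∈ ⋀[ℝ]^k E →
      map π x ∈ (Submodule.map (ι ℝ : E →ₗ[ℝ] ExteriorAlgebra ℝ E) (LinearMap.ker f)) ^ k := by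
    intro k
    induction k with
    | zero =>
      intro x hx
      obtain ⟨r, rfl⟩ := mem_zeroth hx
      rw [AlgHom.commutes, pow_zero]
      exact Submodule.mem_one.mpr ⟨r, rfl⟩
    | succ k ih =>
      intro x hx
      rw [extPow_def, pow_succ'] at hx
      refine Submodule.mul_induction_on hx ?_ ?_
      · rintro _ ⟨u, rfl⟩ y hy
        rw [map_mul, map_apply_ι, pow_succ']
        exact Submodule.mul_mem_mul ⟨π u, hker u, rfl⟩ (ih y hy)
      · intro a b ha hb
        rw [map_add]
        exact Submodule.add_mem _ ha hb
  -- so ω^n ∈ T^(2n), but T^(2n) = 0 by dimension count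
  have hωn_mem : ω ^ n ∈ (Submodule.map (ι ℝ : E →ₗ[ℝ] ExteriorAlgebra ℝ E)
      (LinearMap.ker f)) ^ (2 * n) := by
    have h1 : ω ^ n ∈ ⋀[ℝ]^(2 * n) E := by
      have := Submodule.pow_mem_pow _ hω n
      rwa [extPow_def, ← pow_mul, ← extPow_def] at this
    have := hmem (2 * n) (ω ^ n) h1
    rwa [map_pow, hfix] at this
  have hrank : Module.finrank ℝ (LinearMap.ker f) < 2 * n := by
    have hsum := LinearMap.finrank_range_add_finrank_ker f
    have hrange : LinearMap.range f = ⊤ := by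
      rw [LinearMap.range_eq_top]
      intro c
      exact ⟨c • v₀, by rw [map_smul, hv₀, smul_eq_mul, mul_one]⟩
    rw [hrange, finrank_top, Module.finrank_self, hdim] at hsum
    omega
  exact hωn (top_vanish (by omega : Module.finrank ℝ (LinearMap.ker f) < 2 * n) hωn_mem)


section Lambda

variable {N : ℕ} {ω : ExteriorAlgebra ℝ E}

/-- The "dual Lefschetz" operator. -/
noncomputable def Lam (b : Module.Basis (Fin N) ℝ E) (ψ : E →ₗ[ℝ] Module.Dual ℝ E) :
    Module.End ℝ (ExteriorAlgebra ℝ E) :=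
  (2⁻¹ : ℝ) • ∑ i, ∑ j, (ψ (b j)) (b i) • ((ct (b.coord i)) ∘ₗ (ct (b.coord j)))

lemma Lam_apply (b : Module.Basis (Fin N) ℝ E) (ψ : E →ₗ[ℝ] Module.Dual ℝ E)
    (x : ExteriorAlgebra ℝ E) :
    Lam b ψ x = (2⁻¹ : ℝ) • ∑ i, ∑ j, (ψ (b j)) (b i) •
      ct (b.coord i) (ct (b.coord j) x) := by
  simp [Lam, LinearMap.sum_apply]

lemma Lam_mem (b : Module.Basis (Fin N) ℝ E) (ψ : E →ₗ[ℝ] Module.Dual ℝ E) {d : ℕ}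
    {x : ExteriorAlgebra ℝ E} (hx : x ∈ ⋀[ℝ]^(d+2) E) : Lam b ψ x ∈ ⋀[ℝ]^d E := by
  rw [Lam_apply]
  refine Submodule.smul_mem _ _ (Submodule.sum_mem _ fun i _ => Submodule.sum_mem _
    fun j _ => Submodule.smul_mem _ _ ?_)
  exact ct_mem _ d _ (ct_mem _ (d+1) x hx)

lemma Lam_zeroth (b : Module.Basis (Fin N) ℝ E) (ψ : E →ₗ[ℝ] Module.Dual ℝ E)
    {x : ExteriorAlgebra ℝ E} (hx : x ∈ ⋀[ℝ]^0 E) : Lam b ψ x = 0 := by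
  rw [Lam_apply]
  have h : ∀ i j : Fin N, ct (b.coord i) (ct (b.coord j) x) = 0 := by
    intro i j
    rw [ct_zeroth _ hx, map_zero]
  simp [h]

lemma Lam_first (b : Module.Basis (Fin N) ℝ E) (ψ : E →ₗ[ℝ] Module.Dual ℝ E)
    {x : ExteriorAlgebra ℝ E} (hx : x ∈ ⋀[ℝ]^1 E) : Lam b ψ x = 0 := by
  rw [Lam_apply]
  have h : ∀ i j : Fin N, ct (b.coord i) (ct (b.coord j) x) = 0 := by
    intro i j
    exact ct_zeroth _ (ct_mem _ 0 x hx)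
  simp [h]

/-- Pointwise commutator formula. -/
lemma per_pair (hω : ω ∈ ⋀[ℝ]^2 E) (f g : Module.Dual ℝ E) (x : ExteriorAlgebra ℝ E) :
    ct f (ct g (ω * x)) = ω * ct f (ct g x) + (f (phi ω g)) • x
      - ι ℝ (phi ω g) * ct f x + ι ℝ (phi ω f) * ct g x := by
  rw [ct_comm_two g hω x, map_add, ← ι_phi hω g, ct_ι_mul, ct_comm_two f hω (ct g x),
    ← ι_phi hω f]
  abel

variable (hω : ω ∈ ⋀[ℝ]^2 E)

include hω

lemma sum_S1 (b : Module.Basis (Fin N) ℝ E) (ψ : E →ₗ[ℝ] Module.Dual ℝ E)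
    (hψ : ∀ v, phi ω (ψ v) = v) (g : Module.Dual ℝ E) :
    ∑ i, (g (b i)) • phi ω (b.coord i) = phi ω g := by
  have hs : ∀ i : Fin N, g (b i) • phi ω (b.coord i) = phi ω (g (b i) • b.coord i) :=
    fun i => (map_smul _ _ _).symm
  rw [Finset.sum_congr rfl (fun i _ => hs i), ← map_sum]
  congr 1
  have h := b.dualBasis.sum_repr g
  simp only [Module.Basis.dualBasis_repr, Module.Basis.coe_dualBasis] at h
  exact h

lemma Dc_skew (b : Module.Basis (Fin N) ℝ E) (ψ : E →ₗ[ℝ] Module.Dual ℝ E)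
    (hψ : ∀ v, phi ω (ψ v) = v) (i j : Fin N) :
    (ψ (b j)) (b i) = - (ψ (b i)) (b j) := by
  conv_lhs => rw [← hψ (b i)]
  rw [skew hω (ψ (b i)) (ψ (b j)), hψ (b j)]

lemma sum_S2 (b : Module.Basis (Fin N) ℝ E) (ψ : E →ₗ[ℝ] Module.Dual ℝ E)
    (hψ : ∀ v, phi ω (ψ v) = v) (i : Fin N) :
    ∑ j, ((ψ (b j)) (b i)) • phi ω (b.coord j) = - b i := by
  have h : ∀ j : Fin N, ((ψ (b j)) (b i)) • phi ω (b.coord j)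
      = - (((ψ (b i)) (b j)) • phi ω (b.coord j)) := by
    intro j
    rw [Dc_skew hω b ψ hψ, neg_smul]
  rw [Finset.sum_congr rfl (fun j _ => h j), Finset.sum_neg_distrib]
  rw [sum_S1 hω b ψ hψ (ψ (b i)), hψ]

lemma sum_S3 (b : Module.Basis (Fin N) ℝ E) (ψ : E →ₗ[ℝ] Module.Dual ℝ E)
    (hψ : ∀ v, phi ω (ψ v) = v) (j : Fin N) :
    ∑ i, ((ψ (b j)) (b i)) * ((b.coord i) (phi ω (b.coord j))) = -1 := by
  have h1 : ∑ i, ((ψ (b j)) (b i)) * ((b.coord i) (phi ω (b.coord j)))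
      = (ψ (b j)) (∑ i, ((b.coord i) (phi ω (b.coord j))) • b i) := by
    rw [map_sum]
    congr 1
    ext i
    rw [map_smul, smul_eq_mul, mul_comm]
  rw [h1]
  have h2 : ∑ i, ((b.coord i) (phi ω (b.coord j))) • b i = phi ω (b.coord j) := by
    have h := b.sum_repr (phi ω (b.coord j))
    simpa [Module.Basis.coord_apply] using h
  rw [h2, skew hω (b.coord j) (ψ (b j)), hψ]
  simp [Module.Basis.coord_apply]

lemma commutator (b : Module.Basis (Fin N) ℝ E) (ψ : E →ₗ[ℝ] Module.Dual ℝ E)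
    (hψ : ∀ v, phi ω (ψ v) = v) {d : ℕ} {x : ExteriorAlgebra ℝ E} (hx : x ∈ ⋀[ℝ]^d E) :
    Lam b ψ (ω * x) = ω * Lam b ψ x + ((d : ℝ) - (N : ℝ)/2) • x := by
  rw [Lam_apply, Lam_apply]
  have expand : ∀ i j : Fin N, (ψ (b j)) (b i) • ct (b.coord i) (ct (b.coord j) (ω * x))
      = (ψ (b j)) (b i) • (ω * ct (b.coord i) (ct (b.coord j) x))
        + ((ψ (b j)) (b i) * ((b.coord i) (phi ω (b.coord j)))) • x
        - (ψ (b j)) (b i) • (ι ℝ (phi ω (b.coord j)) * ct (b.coord i) x)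
        + (ψ (b j)) (b i) • (ι ℝ (phi ω (b.coord i)) * ct (b.coord j) x) := by
    intro i j
    rw [per_pair hω (b.coord i) (b.coord j) x]
    rw [smul_add, smul_sub, smul_add, smul_smul]
  simp only [expand]
  simp only [Finset.sum_add_distrib, Finset.sum_sub_distrib, smul_add, smul_sub]
  have hA : ((2⁻¹:ℝ) • ∑ i, ∑ j, (ψ (b j)) (b i) • (ω * ct (b.coord i) (ct (b.coord j) x)))
      = ω * ((2⁻¹:ℝ) • ∑ i, ∑ j, (ψ (b j)) (b i) • ct (b.coord i) (ct (b.coord j) x)) := by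
    simp only [mul_smul_comm, Finset.mul_sum]
  have hB : ((2⁻¹:ℝ) • ∑ i, ∑ j, ((ψ (b j)) (b i) * ((b.coord i) (phi ω (b.coord j)))) • x)
      = (-(N : ℝ)/2) • x := by
    rw [Finset.sum_comm]
    have hin : ∀ j : Fin N,
        ∑ i, ((ψ (b j)) (b i) * ((b.coord i) (phi ω (b.coord j)))) • x = (-1 : ℝ) • x := by
      intro j
      rw [← Finset.sum_smul, sum_S3 hω b ψ hψ j]
    rw [Finset.sum_congr rfl (fun j _ => hin j), Finset.sum_const, Finset.card_univ,
      Fintype.card_fin, ← Nat.cast_smul_eq_nsmul ℝ, smul_smul, smul_smul]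
    congr 1
    ring
  have hC : ((2⁻¹:ℝ) • ∑ i, ∑ j, (ψ (b j)) (b i) • (ι ℝ (phi ω (b.coord j)) * ct (b.coord i) x))
      = (-(d : ℝ)/2) • x := by
    have hin : ∀ i : Fin N,
        ∑ j, (ψ (b j)) (b i) • (ι ℝ (phi ω (b.coord j)) * ct (b.coord i) x)
          = - (ι ℝ (b i) * ct (b.coord i) x) := by
      intro i
      have h1 : ∀ j : Fin N, (ψ (b j)) (b i) • (ι ℝ (phi ω (b.coord j)) * ct (b.coord i) x)
          = ι ℝ ((ψ (b j)) (b i) • phi ω (b.coord j)) * ct (b.coord i) x := by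
        intro j
        rw [map_smul, smul_mul_assoc]
      rw [Finset.sum_congr rfl (fun j _ => h1 j), ← Finset.sum_mul, ← map_sum,
        sum_S2 hω b ψ hψ i, map_neg, neg_mul]
    rw [Finset.sum_congr rfl (fun i _ => hin i), Finset.sum_neg_distrib,
      counting b d x hx, smul_neg, smul_smul]
    rw [← neg_smul]
    congr 1
    ring
  have hD : ((2⁻¹:ℝ) • ∑ i, ∑ j, (ψ (b j)) (b i) • (ι ℝ (phi ω (b.coord i)) * ct (b.coord j) x))
      = ((d : ℝ)/2) • x := by
    rw [Finset.sum_comm]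
    have hin : ∀ j : Fin N,
        ∑ i, (ψ (b j)) (b i) • (ι ℝ (phi ω (b.coord i)) * ct (b.coord j) x)
          = ι ℝ (b j) * ct (b.coord j) x := by
      intro j
      have h1 : ∀ i : Fin N, (ψ (b j)) (b i) • (ι ℝ (phi ω (b.coord i)) * ct (b.coord j) x)
          = ι ℝ ((ψ (b j)) (b i) • phi ω (b.coord i)) * ct (b.coord j) x := by
        intro i
        rw [map_smul, smul_mul_assoc]
      rw [Finset.sum_congr rfl (fun i _ => h1 i), ← Finset.sum_mul, ← map_sum,
        sum_S1 hω b ψ hψ (ψ (b j)), hψ]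
    rw [Finset.sum_congr rfl (fun j _ => hin j), counting b d x hx, smul_smul]
    congr 1
    ring
  rw [hA, hB, hC, hD]
  have hcomb : (-(N:ℝ)/2) • x - (-(d:ℝ)/2) • x + ((d:ℝ)/2) • x = ((d:ℝ) - (N:ℝ)/2) • x := by
    rw [← sub_smul, ← add_smul]
    congr 1
    ring
  rw [add_sub_assoc, add_assoc, hcomb]

end Lambda


section Descent

variable {n : ℕ} {ω : ExteriorAlgebra ℝ E}
variable (hω : ω ∈ ⋀[ℝ]^2 E) (b : Module.Basis (Fin (2*n)) ℝ E)
variable (ψ : E →ₗ[ℝ] Module.Dual ℝ E) (hψ : ∀ v, phi ω (ψ v) = v)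

include hω hψ

lemma comm' {d : ℕ} {x : ExteriorAlgebra ℝ E} (hx : x ∈ ⋀[ℝ]^d E) :
    Lam b ψ (ω * x) = ω * Lam b ψ x + ((d : ℝ) - (n : ℝ)) • x := by
  rw [commutator hω b ψ hψ hx]
  congr 2
  push_cast
  ring

lemma aux2 : ∀ (m : ℕ) {d : ℕ} {x : ExteriorAlgebra ℝ E},
    x ∈ ⋀[ℝ]^d E → ω * x = 0 →
    (((Lam b ψ) ^ m) x = 0 ∨ (2*m ≤ d ∧ ((Lam b ψ) ^ m) x ∈ ⋀[ℝ]^(d - 2*m) E)) ∧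
    ω * (((Lam b ψ) ^ (m+1)) x)
      = (((m:ℝ)+1) * (((n:ℝ) - (d:ℝ)) + (m:ℝ))) • (((Lam b ψ) ^ m) x) := by
  intro m
  induction m with
  | zero =>
    intro d x hx h0
    constructor
    · right
      refine ⟨by omega, ?_⟩
      simpa using hx
    · have hc := comm' hω b ψ hψ hx
      rw [h0, map_zero] at hc
      have : ω * Lam b ψ x = ((n:ℝ) - (d:ℝ)) • x := by
        have := hc.symm
        rw [add_eq_zero_iff_eq_neg] at this
        rw [this, ← neg_smul]
        congr 1
        ring
      simpa using this
  | succ m ih =>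
    intro d x hx h0
    obtain ⟨hmem, heq⟩ := ih hx h0
    have hpow : ((Lam b ψ) ^ (m+1)) x = Lam b ψ (((Lam b ψ) ^ m) x) := by
      rw [pow_succ', Module.End.mul_apply]
    have hpow2 : ((Lam b ψ) ^ (m+2)) x = Lam b ψ (((Lam b ψ) ^ (m+1)) x) := by
      rw [pow_succ', Module.End.mul_apply]
    have hmem' : ((Lam b ψ) ^ (m+1)) x = 0
        ∨ (2*(m+1) ≤ d ∧ ((Lam b ψ) ^ (m+1)) x ∈ ⋀[ℝ]^(d - 2*(m+1)) E) := by
      rcases hmem with h | ⟨hle, hm⟩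
      · left
        rw [hpow, h, map_zero]
      · by_cases h2 : 2*(m+1) ≤ d
        · right
          refine ⟨h2, ?_⟩
          have hrw : d - 2*m = (d - 2*(m+1)) + 2 := by omega
          rw [hrw] at hm
          rw [hpow]
          exact Lam_mem b ψ hm
        · left
          have : d - 2*m = 0 ∨ d - 2*m = 1 := by omega
          rcases this with h | h
          · rw [h] at hm
            rw [hpow]
            exact Lam_zeroth b ψ hm
          · rw [h] at hm
            rw [hpow]
            exact Lam_first b ψ hm
    refine ⟨hmem', ?_⟩
    rcases hmem' with h | ⟨h2, hm⟩
    · rw [hpow2, h, map_zero, smul_zero, mul_zero]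
    · have hc := comm' hω b ψ hψ hm
      rw [heq, map_smul] at hc
      rw [← hpow2] at hc
      have : ω * (((Lam b ψ) ^ (m+2)) x)
          = ((((m:ℝ)+1) * (((n:ℝ) - (d:ℝ)) + (m:ℝ))) - (((d - 2*(m+1) : ℕ) : ℝ) - (n:ℝ)))
            • (((Lam b ψ) ^ (m+1)) x) := by
        rw [sub_smul]
        rw [← hpow] at hc
        rw [eq_comm] at hc
        exact eq_sub_of_add_eq hc
      rw [this]
      congr 1
      have hcast : ((d - 2*(m+1) : ℕ) : ℝ) = (d:ℝ) - 2*((m:ℝ)+1) := by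
        push_cast [Nat.cast_sub h2]
        ring
      rw [hcast]
      push_cast
      ring

lemma descent : ∀ (m : ℕ) {d : ℕ} {x : ExteriorAlgebra ℝ E},
    x ∈ ⋀[ℝ]^d E → ω * x = 0 → ((d:ℝ) < (n:ℝ)) → ((Lam b ψ) ^ m) x = 0 → x = 0 := by
  intro m
  induction m with
  | zero =>
    intro d x _ _ _ h
    simpa using h
  | succ m ih =>
    intro d x hx h0 hd h
    have heq := (aux2 hω b ψ hψ m hx h0).2
    rw [h, mul_zero] at heq
    have hcpos : 0 < ((m:ℝ)+1) * (((n:ℝ) - (d:ℝ)) + (m:ℝ)) := by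
      apply mul_pos
      · positivity
      · have : (0:ℝ) < (n:ℝ) - (d:ℝ) := by linarith
        positivity
    have hzero : ((Lam b ψ) ^ m) x = 0 := by
      have := heq.symm
      rw [smul_eq_zero] at this
      rcases this with h | h
      · exact absurd h (ne_of_gt hcpos)
      · exact h
    exact ih hx h0 hd hzero

end Descent

lemma key_vanish [FiniteDimensional ℝ E] {n : ℕ} (hn : 1 ≤ n)
    (hdim : Module.finrank ℝ E = 2 * n)
    {ω : ExteriorAlgebra ℝ E} (hω : ω ∈ ⋀[ℝ]^2 E) (hωn : ω ^ n ≠ 0)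
    {k : ℕ} (hk : k ≤ n - 1) {x : ExteriorAlgebra ℝ E} (hx : x ∈ ⋀[ℝ]^k E)
    (h0 : ω * x = 0) : x = 0 := by
  have hinj := phi_injective hn hdim hω hωn
  have hsurj : Function.Surjective (phi ω) := by
    have hfr : Module.finrank ℝ (Module.Dual ℝ E) = Module.finrank ℝ E :=
      Subspace.dual_finrank_eq
    exact (LinearMap.injective_iff_surjective_of_finrank_eq_finrank hfr).mp hinj
  let eφ := LinearEquiv.ofBijective (phi ω) ⟨hinj, hsurj⟩
  let ψ : E →ₗ[ℝ] Module.Dual ℝ E := eφ.symm.toLinearMap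
  have hψ : ∀ v, phi ω (ψ v) = v := fun v => eφ.apply_symm_apply v
  let b : Module.Basis (Fin (2*n)) ℝ E := Module.finBasisOfFinrankEq ℝ E hdim
  have hd : (k:ℝ) < (n:ℝ) := by
    have : k < n := by omega
    exact_mod_cast this
  have hm := (aux2 hω b ψ hψ (k+1) hx h0).1
  rcases hm with h | ⟨h2, _⟩
  · exact descent hω b ψ hψ (k+1) hx h0 hd h
  · omega

end LefAux


/-- The wedge-multiplication map `W_k : ⋀^k E → ⋀^{k+2} E`, `α ↦ ω ∧ α`. -/
noncomputable def wedgeOmega {E : Type*} [AddCommGroup E] [Module ℝ E]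
    (ω : ExteriorAlgebra ℝ E) (hω : ω ∈ ⋀[ℝ]^2 E) (k : ℕ) :
    (⋀[ℝ]^k E) →ₗ[ℝ] (⋀[ℝ]^(k+2) E) where
  toFun α := ⟨ω * (α : ExteriorAlgebra ℝ E), by
    have : ω * (α : ExteriorAlgebra ℝ E) ∈ (⋀[ℝ]^2 E) * (⋀[ℝ]^k E) :=
      Submodule.mul_mem_mul hω α.2
    rwa [← pow_add, add_comm] at this⟩
  map_add' α β := Subtype.ext (by simp [mul_add])
  map_smul' c α := Subtype.ext (by simp [mul_smul_comm])

/-- for `0 ≤ k ≤ n-1`, the map `W_k` is injective. -/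
theorem wedgeOmega_injective {E : Type*} [AddCommGroup E] [Module ℝ E]
    [FiniteDimensional ℝ E] (n : ℕ) (hn : 1 ≤ n)
    (hdim : Module.finrank ℝ E = 2 * n)
    (ω : ExteriorAlgebra ℝ E) (hω : ω ∈ ⋀[ℝ]^2 E) (hωn : ω ^ n ≠ 0)
    (k : ℕ) (hk : k ≤ n - 1) :
    Function.Injective (wedgeOmega ω hω k) := by
  intro α β hab
  have hsub : wedgeOmega ω hω k (α - β) = 0 := by rw [map_sub, hab, sub_self]
  have hval : ω * ((α - β : ⋀[ℝ]^k E) : ExteriorAlgebra ℝ E) = 0 :=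
    congrArg Subtype.val hsub
  have h0 : ((α - β : ⋀[ℝ]^k E) : ExteriorAlgebra ℝ E) = 0 :=
    LefAux.key_vanish hn hdim hω hωn hk (α - β).2 hval
  have hz : α - β = 0 := Subtype.ext h0
  exact sub_eq_zero.mp hz
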